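/- Define M : ℕ → ℚ by M(n) = 2·3^n·(2n)! / (n!·(n+2)!). Then M(0) = 1 and for all n ≥ 1: (n+1)·M(n) = 4(2n−1)·M(n−1) + 3·Σ_{i+j=n−2, i,j≥0} (2i+1)(2j+1)·M(i)·M(j). -/

import Mathlib

open Finset

private lemma factQ_ne (n : ℕ) : (Nat.factorial n : ℚ) ≠ 0 := by
  exact_mod_cast Nat.factorial_ne_zero n

private lemma tutteM_aux1 (n : ℕ) :
    ((Nat.factorial (2 * n) : ℚ)) =
      ((n : ℚ) + 1) * (catalan n : ℚ) * (Nat.factorial n : ℚ) * (Nat.factorial n : ℚ) := by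
  have h := Nat.choose_mul_factorial_mul_factorial (Nat.le_mul_of_pos_left n (by norm_num : 0 < 2))
  have h2 : 2 * n - n = n := by omega
  rw [h2] at h
  have h3 : (n + 1) * catalan n = (2 * n).choose n := by
    rw [← Nat.centralBinom_eq_two_mul_choose]
    exact succ_mul_catalan_eq_centralBinom n
  have h4 : ((n + 1) * catalan n * Nat.factorial n * Nat.factorial n : ℕ) =
      Nat.factorial (2 * n) := by rw [h3]; exact h
  exact_mod_cast h4.symm

/-- Catalan recurrence in `ℚ`: `(n+2)·C_{n+1} = 2(2n+1)·C_n`. -/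
private lemma catalan_rec (n : ℕ) :
    ((n : ℚ) + 2) * (catalan (n + 1) : ℚ) = 2 * (2 * (n : ℚ) + 1) * (catalan n : ℚ) := by
  have e1 : ((n : ℚ) + 2) * (catalan (n + 1) : ℚ) = (Nat.centralBinom (n + 1) : ℚ) := by
    have := succ_mul_catalan_eq_centralBinom (n + 1); exact_mod_cast this
  have e2 : ((n : ℚ) + 1) * (Nat.centralBinom (n + 1) : ℚ) =
      2 * (2 * (n : ℚ) + 1) * (Nat.centralBinom n : ℚ) := by
    have := Nat.succ_mul_centralBinom_succ n; exact_mod_cast this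
  have e3 : ((n : ℚ) + 1) * (catalan n : ℚ) = (Nat.centralBinom n : ℚ) := by
    have := succ_mul_catalan_eq_centralBinom n; exact_mod_cast this
  have hn1 : ((n : ℚ) + 1) ≠ 0 := by positivity
  apply mul_left_cancel₀ hn1
  rw [e1, e2, ← e3]; ring

private lemma final_identity (t X a b c : ℚ) (h3 : t + 3 ≠ 0) (h4 : t + 4 ≠ 0)
    (h5 : 2 * t + 3 ≠ 0)
    (r1 : (t + 4) * c = 2 * (2 * t + 5) * b)
    (r2 : (t + 3) * b = 2 * (2 * t + 3) * a) :
    (t + 2 + 1) * (2 * (X * 9) * b / (t + 4)) =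
      4 * (2 * (t + 2) - 1) * (2 * (X * 3) * a / (t + 3)) + 3 * (X * (c - 2 * b)) := by
  have hc : c = 2 * (2 * t + 5) * b / (t + 4) := by
    field_simp; linear_combination r1
  have ha : a = (t + 3) * b / (2 * (2 * t + 3)) := by
    rw [eq_div_iff (mul_ne_zero two_ne_zero h5)]; linear_combination -r2
  rw [hc, ha]
  field_simp [show t * 2 + 3 ≠ 0 by rwa [mul_comm]]
  ring

/-- Tutte's closed formula for the number of rooted planar maps with `n` edges:
`M(n) = 2·3^n·(2n)! / (n!·(n+2)!)`. -/
def tutteM (n : ℕ) : ℚ :=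
  2 * 3 ^ n * (Nat.factorial (2 * n) : ℚ) /
    ((Nat.factorial n : ℚ) * (Nat.factorial (n + 2) : ℚ))

/-- `tutteM n = 2·3^n·catalan n / (n+2)`. -/
private lemma tutteM_eq (n : ℕ) :
    tutteM n = 2 * 3 ^ n * (catalan n : ℚ) / ((n : ℚ) + 2) := by
  have h1 := tutteM_aux1 n
  have h2 : ((Nat.factorial (n + 2) : ℚ)) =
      ((n : ℚ) + 2) * ((n : ℚ) + 1) * (Nat.factorial n : ℚ) := by
    rw [show n + 2 = (n + 1) + 1 from rfl, Nat.factorial_succ, Nat.factorial_succ]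
    push_cast; ring
  rw [tutteM, h1, h2]
  have hn1 : ((n : ℚ) + 1) ≠ 0 := by positivity
  have hn2 : ((n : ℚ) + 2) ≠ 0 := by positivity
  field_simp [factQ_ne]

/-- `(2n+1)·tutteM n = 3^n·catalan (n+1)`. -/
private lemma opM (n : ℕ) :
    (2 * (n : ℚ) + 1) * tutteM n = 3 ^ n * (catalan (n + 1) : ℚ) := by
  have hn2 : ((n : ℚ) + 2) ≠ 0 := by positivity
  rw [tutteM_eq]
  have h := catalan_rec n
  field_simp
  linear_combination (-1 : ℚ) * h

/-- Catalan convolution, shifted: `∑_{i=0}^{m} C_{i+1}·C_{m-i+1} = C_{m+3} - 2·C_{m+2}` (in ℕ form). -/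
private lemma catalan_conv (m : ℕ) :
    catalan (m + 3) =
      2 * catalan (m + 2) +
        ∑ i ∈ range (m + 1), catalan (i + 1) * catalan (m - i + 1) := by
  have h := catalan_succ' (m + 2)
  rw [Nat.sum_antidiagonal_eq_sum_range_succ (fun x y => catalan x * catalan y)] at h
  rw [show m + 2 + 1 = m + 3 from rfl] at h
  rw [Finset.sum_range_succ, Finset.sum_range_succ'] at h
  simp only [catalan_zero, Nat.sub_self, mul_one, one_mul, Nat.sub_zero] at h
  rw [h]
  have : ∀ i ∈ range (m + 1),
      catalan (i + 1) * catalan (m + 2 - (i + 1)) =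
      catalan (i + 1) * catalan (m - i + 1) := by
    intro i hi
    simp only [mem_range] at hi
    congr 2
    omega
  rw [Finset.sum_congr rfl this]
  ring

/-- Reduce the double `if`-sum to a single convolution sum. -/
private lemma double_sum_eq (m : ℕ) (g : ℕ → ℕ → ℚ) :
    (∑ i ∈ range (m + 3), ∑ j ∈ range (m + 3),
        if i + j + 2 = m + 2 then g i j else 0)
      = ∑ i ∈ range (m + 1), g i (m - i) := by
  have inner : ∀ i, (∑ j ∈ range (m + 3), if i + j + 2 = m + 2 then g i j else 0)
      = if i ≤ m then g i (m - i) else 0 := by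
    intro i
    by_cases hi : i ≤ m
    · rw [if_pos hi]
      have step : ∀ j, (if i + j + 2 = m + 2 then g i j else 0)
          = if j = m - i then g i j else 0 := by
        intro j
        exact if_congr (by omega) rfl rfl
      rw [Finset.sum_congr rfl fun j _ => step j]
      rw [Finset.sum_ite_eq' (range (m + 3)) (m - i) (g i)]
      rw [if_pos (by simp only [mem_range]; omega)]
    · rw [if_neg hi]
      apply Finset.sum_eq_zero
      intro j _
      rw [if_neg (by omega)]
  rw [Finset.sum_congr rfl fun i _ => inner i]
  rw [← Finset.sum_subset (Finset.range_subset_range.2 (by omega : m + 1 ≤ m + 3))]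
  · apply Finset.sum_congr rfl
    intro i hi
    simp only [mem_range] at hi
    rw [if_pos (by omega)]
  · intro i _ hi
    simp only [mem_range] at hi
    rw [if_neg (by omega)]

theorem tutte_satisfies_cc_summed :
    tutteM 0 = 1 ∧
      ∀ n : ℕ, 1 ≤ n →
        ((n : ℚ) + 1) * tutteM n =
          4 * (2 * (n : ℚ) - 1) * tutteM (n - 1) +
            3 * ∑ i ∈ Finset.range (n + 1), ∑ j ∈ Finset.range (n + 1),
              if i + j + 2 = n then
                (2 * (i : ℚ) + 1) * (2 * (j : ℚ) + 1) * tutteM i * tutteM j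
              else 0 := by
  constructor
  · norm_num [tutteM, Nat.factorial]
  · intro n hn
    match n, hn with
    | 1, _ =>
      have hsum : (∑ i ∈ Finset.range 2, ∑ j ∈ Finset.range 2,
          if i + j + 2 = 1 then
            (2 * (i : ℚ) + 1) * (2 * (j : ℚ) + 1) * tutteM i * tutteM j
          else 0) = 0 := by
        apply Finset.sum_eq_zero; intro i _
        apply Finset.sum_eq_zero; intro j _
        rw [if_neg (by omega)]
      rw [hsum]
      norm_num [tutteM, Nat.factorial]
    | (m + 2), _ =>
      -- rewrite the double sum
      have hd := double_sum_eq m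
        (fun i j => (2 * (i : ℚ) + 1) * (2 * (j : ℚ) + 1) * tutteM i * tutteM j)
      rw [show m + 2 + 1 = m + 3 from rfl, hd]
      -- evaluate each convolution term via `opM`
      have hterm : ∀ i ∈ range (m + 1),
          (2 * (i : ℚ) + 1) * (2 * ((m - i : ℕ) : ℚ) + 1) * tutteM i * tutteM (m - i)
            = (3 : ℚ) ^ m * (catalan (i + 1) * catalan (m - i + 1)) := by
        intro i hi
        simp only [mem_range] at hi
        have h1 := opM i
        have h2 := opM (m - i)
        have : (2 * (i : ℚ) + 1) * (2 * ((m - i : ℕ) : ℚ) + 1) * tutteM i * tutteM (m - i)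
            = ((2 * (i : ℚ) + 1) * tutteM i) * ((2 * ((m - i : ℕ) : ℚ) + 1) * tutteM (m - i)) := by
          ring
        rw [this, h1, h2]
        have hpow : (3 : ℚ) ^ i * (3 : ℚ) ^ (m - i) = 3 ^ m := by
          rw [← pow_add]; congr 1; omega
        calc (3:ℚ) ^ i * (catalan (i+1):ℚ) * ((3:ℚ) ^ (m-i) * (catalan (m-i+1):ℚ))
            = ((3:ℚ) ^ i * 3 ^ (m-i)) * ((catalan (i+1):ℚ) * (catalan (m-i+1):ℚ)) := by ring
          _ = (3:ℚ) ^ m * (catalan (i+1) * catalan (m-i+1)) := by rw [hpow]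
      rw [Finset.sum_congr rfl hterm, ← Finset.mul_sum]
      have hconv : (∑ i ∈ range (m + 1),
          (catalan (i + 1) : ℚ) * (catalan (m - i + 1) : ℚ))
          = (catalan (m + 3) : ℚ) - 2 * (catalan (m + 2) : ℚ) := by
        have h := catalan_conv m
        have h' : ((catalan (m + 3) : ℕ) : ℚ) = ((2 * catalan (m + 2) +
            ∑ i ∈ range (m + 1), catalan (i + 1) * catalan (m - i + 1) : ℕ) : ℚ) := by
          exact_mod_cast congrArg (fun k : ℕ => (k : ℚ)) h
        push_cast at h'
        linarith [h']
      rw [hconv]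
      -- now the pure rational identity
      have e1 : tutteM (m + 2) = 2 * ((3:ℚ) ^ m * 9) * (catalan (m + 2) : ℚ) / ((m : ℚ) + 4) := by
        rw [tutteM_eq]
        have : ((3:ℚ) ^ (m + 2)) = 3 ^ m * 9 := by ring
        rw [this]
        norm_num
        ring_nf
      have e2 : tutteM (m + 2 - 1) = 2 * ((3:ℚ) ^ m * 3) * (catalan (m + 1) : ℚ) / ((m : ℚ) + 3) := by
        rw [show m + 2 - 1 = m + 1 from rfl, tutteM_eq]
        have : ((3:ℚ) ^ (m + 1)) = 3 ^ m * 3 := by ring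
        rw [this]
        norm_num
        ring_nf
      rw [e1, e2]
      have r1 : ((m : ℚ) + 4) * (catalan (m + 3) : ℚ)
          = 2 * (2 * (m : ℚ) + 5) * (catalan (m + 2) : ℚ) := by
        have := catalan_rec (m + 2); push_cast at this ⊢; linarith [this]
      have r2 : ((m : ℚ) + 3) * (catalan (m + 2) : ℚ)
          = 2 * (2 * (m : ℚ) + 3) * (catalan (m + 1) : ℚ) := by
        have := catalan_rec (m + 1); push_cast at this ⊢; linarith [this]
      have h3 : ((m : ℚ) + 3) ≠ 0 := by positivity
      have h4 : ((m : ℚ) + 4) ≠ 0 := by positivity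
      have h5 : (2 * (m : ℚ) + 3) ≠ 0 := by positivity
      have key := final_identity ((m : ℚ)) ((3:ℚ) ^ m) (catalan (m + 1) : ℚ)
        (catalan (m + 2) : ℚ) (catalan (m + 3) : ℚ) h3 h4 h5 r1 r2
      have p3 : (((m + 2 : ℕ)) : ℚ) = (m : ℚ) + 2 := by push_cast; ring
      rw [p3]
      exact key
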